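/- Let (X,f) be a densely aperiodic topological dynamical system. Then every minimal quasi-section has empty interior (i.e., is continuously decisive). -/

import Mathlib

open Set

/-- The full orbit `{fⁿ(x) : n ∈ ℤ}` of a point under a homeomorphism. -/
def orbitZ {X : Type*} [TopologicalSpace X] (f : X ≃ₜ X) (x : X) : Set X :=
  {y | ∃ n : ℤ, (f.toEquiv ^ n) x = y}

/-- `O(A) = ⋃_{n ∈ ℤ} fⁿ(A)`. -/
def orbitSetZ {X : Type*} [TopologicalSpace X] (f : X ≃ₜ X) (A : Set X) : Set X :=
  ⋃ n : ℤ, (f.toEquiv ^ n) '' A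

/-- `O⁺(A) = ⋃_{n ≥ 0} fⁿ(A)`. -/
def orbitSetP {X : Type*} [TopologicalSpace X] (f : X ≃ₜ X) (A : Set X) : Set X :=
  ⋃ n : ℕ, (f.toEquiv ^ (n : ℤ)) '' A

/-- `O⁻(A) = ⋃_{n ≤ 0} fⁿ(A)`. -/
def orbitSetN {X : Type*} [TopologicalSpace X] (f : X ≃ₜ X) (A : Set X) : Set X :=
  ⋃ n : ℕ, (f.toEquiv ^ (-(n : ℤ))) '' A

/-- The ω-limit set of a point. -/
def omegaSet {X : Type*} [TopologicalSpace X] (f : X ≃ₜ X) (x : X) : Set X :=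
  ⋂ n : ℕ, closure {y | ∃ m : ℕ, n ≤ m ∧ (f.toEquiv ^ (m : ℤ)) x = y}

/-- The α-limit set of a point. -/
def alphaSet {X : Type*} [TopologicalSpace X] (f : X ≃ₜ X) (x : X) : Set X :=
  ⋂ n : ℕ, closure {y | ∃ m : ℕ, n ≤ m ∧ (f.toEquiv ^ (-(m : ℤ))) x = y}

/-- A minimal set: nonempty, closed, invariant, and every orbit in it is dense in it. -/
def IsMinimalSet {X : Type*} [TopologicalSpace X] (f : X ≃ₜ X) (M : Set X) : Prop :=
  M.Nonempty ∧ IsClosed M ∧ f '' M = M ∧ ∀ x ∈ M, M ⊆ closure (orbitZ f x)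

/-- `M_f`: the closure of the union of all minimal sets. -/
def minimalUnion {X : Type*} [TopologicalSpace X] (f : X ≃ₜ X) : Set X :=
  closure (⋃₀ {M | IsMinimalSet f M})

/-- A wandering point. -/
def IsWandering {X : Type*} [TopologicalSpace X] (f : X ≃ₜ X) (x : X) : Prop :=
  ∃ U : Set X, IsOpen U ∧ x ∈ U ∧ ∀ n : ℤ, n ≠ 0 → (f.toEquiv ^ n) '' U ∩ U = ∅

/-- `Ω_f`: the set of non-wandering points. -/
def nonWandering {X : Type*} [TopologicalSpace X] (f : X ≃ₜ X) : Set X :=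
  {x | ¬ IsWandering f x}

/-- A quasi-section: a closed set every open neighborhood of which has full orbit. -/
def IsQuasiSection {X : Type*} [TopologicalSpace X] (f : X ≃ₜ X) (A : Set X) : Prop :=
  IsClosed A ∧ ∀ U : Set X, IsOpen U → A ⊆ U → orbitSetZ f U = Set.univ

/-- A minimal quasi-section (minimal w.r.t. inclusion among quasi-sections). -/
def IsMinimalQuasiSection {X : Type*} [TopologicalSpace X] (f : X ≃ₜ X) (A : Set X) : Prop :=
  IsQuasiSection f A ∧ ∀ B : Set X, IsQuasiSection f B → B ⊆ A → B = A

/-- A basic set: a quasi-section meeting every orbit in at most one point. -/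
def IsBasicSet {X : Type*} [TopologicalSpace X] (f : X ≃ₜ X) (A : Set X) : Prop :=
  IsQuasiSection f A ∧ ∀ x : X, (orbitZ f x ∩ A).Subsingleton

/-- A minimal basic set (minimal w.r.t. inclusion among basic sets). -/
def IsMinimalBasicSet {X : Type*} [TopologicalSpace X] (f : X ≃ₜ X) (A : Set X) : Prop :=
  IsBasicSet f A ∧ ∀ B : Set X, IsBasicSet f B → B ⊆ A → B = A

/-- Densely aperiodic: the points with infinite orbit are dense. -/
def DenselyAperiodic {X : Type*} [TopologicalSpace X] (f : X ≃ₜ X) : Prop :=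
  Dense {x : X | (orbitZ f x).Infinite}

section Aux

variable {X : Type*} [TopologicalSpace X] (f : X ≃ₜ X)

lemma zpow_apply_add' (m n : ℤ) (x : X) :
    (f.toEquiv ^ (m + n)) x = (f.toEquiv ^ m) ((f.toEquiv ^ n) x) := by
  rw [zpow_add, Equiv.Perm.mul_apply]

lemma cont_zpow' (n : ℤ) : Continuous fun x : X => (f.toEquiv ^ n) x := by
  induction n using Int.induction_on with
  | zero => simpa using continuous_id'
  | succ k ih =>
      have h : ∀ x : X, (f.toEquiv ^ ((k : ℤ) + 1)) x = (f.toEquiv ^ (k : ℤ)) (f x) := by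
        intro x
        rw [zpow_apply_add' f k 1, zpow_one]
        rfl
      simp only [h]
      exact ih.comp f.continuous
  | pred k ih =>
      have h : ∀ x : X, (f.toEquiv ^ (-(k : ℤ) - 1)) x = (f.toEquiv ^ (-(k : ℤ))) (f.symm x) := by
        intro x
        rw [sub_eq_add_neg, zpow_apply_add' f (-k) (-1)]
        congr 1
      simp only [h]
      exact ih.comp f.symm.continuous

lemma mem_orbitZ_self' (x : X) : x ∈ orbitZ f x := ⟨0, by simp⟩

lemma zpow_mem_orbitZ' {x y : X} (hy : y ∈ orbitZ f x) (n : ℤ) :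
    (f.toEquiv ^ n) y ∈ orbitZ f x := by
  obtain ⟨m, rfl⟩ := hy
  exact ⟨n + m, zpow_apply_add' f n m x⟩

lemma zpow_mem_closure_orbitZ' {x y : X} (hy : y ∈ closure (orbitZ f x)) (n : ℤ) :
    (f.toEquiv ^ n) y ∈ closure (orbitZ f x) := by
  have h1 : (fun z : X => (f.toEquiv ^ n) z) '' closure (orbitZ f x)
      ⊆ closure ((fun z : X => (f.toEquiv ^ n) z) '' orbitZ f x) :=
    image_closure_subset_closure_image (cont_zpow' f n)
  have h2 : (fun z : X => (f.toEquiv ^ n) z) '' orbitZ f x ⊆ orbitZ f x := by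
    rintro _ ⟨y, hy, rfl⟩
    exact zpow_mem_orbitZ' f hy n
  exact closure_mono h2 (h1 ⟨y, hy, rfl⟩)

/-- A quasi-section meets the orbit closure of every point. -/
lemma qs_meets_orbit_closure' {A : Set X} [CompactSpace X] (hA : IsQuasiSection f A) (a : X) :
    (closure (orbitZ f a) ∩ A).Nonempty := by
  by_contra h
  rw [not_nonempty_iff_eq_empty] at h
  have hsub : A ⊆ (closure (orbitZ f a))ᶜ := fun t ht htc =>
    eq_empty_iff_forall_notMem.mp h t ⟨htc, ht⟩
  have h2 := hA.2 _ isClosed_closure.isOpen_compl hsub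
  have ha : a ∈ orbitSetZ f (closure (orbitZ f a))ᶜ := by rw [h2]; trivial
  simp only [orbitSetZ, mem_iUnion, mem_image] at ha
  obtain ⟨n, y, hyc, hyeq⟩ := ha
  apply hyc
  apply subset_closure
  refine ⟨-n, ?_⟩
  apply (f.toEquiv ^ n).injective
  rw [← zpow_apply_add' f n (-n) a, add_neg_cancel, zpow_zero, hyeq]
  rfl

/-- If a closed subset `B` of a quasi-section `A` meets the orbit closure of every point
of `A`, then `B` is a quasi-section. -/
lemma qs_of_meets' {A B : Set X} [CompactSpace X] (hA : IsQuasiSection f A) (hBA : B ⊆ A)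
    (hB : IsClosed B) (h : ∀ a ∈ A, (closure (orbitZ f a) ∩ B).Nonempty) :
    IsQuasiSection f B := by
  refine ⟨hB, fun U hU hBU => ?_⟩
  have hcov : A ⊆ ⋃ n : ℤ, (fun x : X => (f.toEquiv ^ n) x) ⁻¹' U := by
    intro a ha
    obtain ⟨b, hbc, hbB⟩ := h a ha
    obtain ⟨y, hyU, hyo⟩ := mem_closure_iff.1 hbc U hU (hBU hbB)
    obtain ⟨n, rfl⟩ := hyo
    exact mem_iUnion.2 ⟨n, hyU⟩
  obtain ⟨F, hF⟩ := (hA.1.isCompact).elim_finite_subcover _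
    (fun n : ℤ => hU.preimage (cont_zpow' f n)) hcov
  have hW : IsOpen (⋃ n ∈ F, (fun x : X => (f.toEquiv ^ n) x) ⁻¹' U) :=
    isOpen_biUnion (fun n _ => hU.preimage (cont_zpow' f n))
  have hfull := hA.2 _ hW hF
  apply eq_univ_of_forall
  intro x
  have hx : x ∈ orbitSetZ f (⋃ n ∈ F, (fun x : X => (f.toEquiv ^ n) x) ⁻¹' U) := by
    rw [hfull]; trivial
  simp only [orbitSetZ, mem_iUnion, mem_image] at hx
  obtain ⟨m, w, hwW, rfl⟩ := hx
  obtain ⟨n, hnF, hwU⟩ := hwW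
  simp only [orbitSetZ, mem_iUnion, mem_image]
  refine ⟨m - n, (f.toEquiv ^ n) w, hwU, ?_⟩
  rw [← zpow_apply_add' f (m - n) n w, sub_add_cancel]

/-- A point with infinite orbit is not fixed by any nonzero power. -/
lemma aperiodic_ne' {x : X} (hx : (orbitZ f x).Infinite) {n : ℤ} (hn : n ≠ 0) :
    (f.toEquiv ^ n) x ≠ x := by
  intro he
  set g : ℤ → X := fun k => (f.toEquiv ^ k) x with hg
  have hper : Function.Periodic g n := by
    intro k
    simp only [hg]
    rw [zpow_apply_add' f k n x, he]
  obtain ⟨c, hc, hpc⟩ : ∃ c : ℤ, 0 < c ∧ Function.Periodic g c := by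
    rcases hn.lt_or_gt with h | h
    · exact ⟨-n, by omega, hper.neg⟩
    · exact ⟨n, h, hper⟩
  have hsub : orbitZ f x ⊆ g '' Set.Ico 0 c := by
    rintro y ⟨k, rfl⟩
    obtain ⟨j, hj, hje⟩ := hpc.exists_mem_Ico₀ hc k
    exact ⟨j, hj, hje.symm⟩
  exact hx (((Set.finite_Ico 0 c).image g).subset hsub)

end Aux

theorem stmt6 {X : Type*} [TopologicalSpace X] [CompactSpace X] [T2Space X] [Nonempty X] (f : X ≃ₜ X)
    (hf : DenselyAperiodic f)
    (A : Set X) (hA : IsMinimalQuasiSection f A) :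
    interior A = ∅ := by
  by_contra hne
  set G := interior A with hGdef
  have hGne : G.Nonempty := nonempty_iff_ne_empty.2 hne
  have hGopen : IsOpen G := isOpen_interior
  have hGA : G ⊆ A := interior_subset
  obtain ⟨hAqs, hmin⟩ := hA
  by_cases hcase : ∃ n : ℤ, n ≠ 0 ∧ (G ∩ (fun x : X => (f.toEquiv ^ n) x) ⁻¹' G).Nonempty
  · -- Case 1 : some interior point comes back to the interior
    obtain ⟨n, hn, hne2⟩ := hcase
    have hOopen : IsOpen (G ∩ (fun x : X => (f.toEquiv ^ n) x) ⁻¹' G) :=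
      hGopen.inter (hGopen.preimage (cont_zpow' f n))
    obtain ⟨q, hqap, hqO⟩ := hf.exists_mem_open hOopen hne2
    have hq1 : q ∈ G := hqO.1
    have hq2 : (f.toEquiv ^ n) q ∈ G := hqO.2
    have hqne : (f.toEquiv ^ n) q ≠ q := aperiodic_ne' f hqap hn
    obtain ⟨W₂, W₁, hW₂o, hW₁o, hfqW₂, hqW₁, hdisj⟩ := t2_separation hqne
    set O := (G ∩ (fun x : X => (f.toEquiv ^ n) x) ⁻¹' G ∩ W₁) ∩
      (fun x : X => (f.toEquiv ^ n) x) ⁻¹' W₂ with hOdef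
    have hOopen2 : IsOpen O :=
      ((hOopen.inter hW₁o).inter (hW₂o.preimage (cont_zpow' f n)))
    have hqO2 : q ∈ O := ⟨⟨⟨hq1, hq2⟩, hqW₁⟩, hfqW₂⟩
    obtain ⟨t, htn, htc, htO⟩ := exists_mem_nhds_isClosed_subset (hOopen2.mem_nhds hqO2)
    set V := interior t with hVdef
    have hVo : IsOpen V := isOpen_interior
    have hqV : q ∈ V := mem_interior_iff_mem_nhds.2 htn
    have hVsub : closure V ⊆ O := by
      calc closure V ⊆ closure t := closure_mono interior_subset
      _ = t := htc.closure_eq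
      _ ⊆ O := htO
    have hBqs : IsQuasiSection f (A \ V) := by
      refine qs_of_meets' f hAqs diff_subset (hAqs.1.sdiff hVo) (fun a ha => ?_)
      obtain ⟨c, hcC, hcA⟩ := qs_meets_orbit_closure' f hAqs a
      by_cases hcV : c ∈ V
      · refine ⟨(f.toEquiv ^ n) c, zpow_mem_closure_orbitZ' f hcC n, ?_, ?_⟩
        · exact hGA (hVsub (subset_closure hcV)).1.1.2
        · intro hmem
          have h1 : (f.toEquiv ^ n) c ∈ W₂ := (hVsub (subset_closure hcV)).2
          have h2 : (f.toEquiv ^ n) c ∈ W₁ := (hVsub (subset_closure hmem)).1.2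
          exact Set.disjoint_left.1 hdisj h1 h2
      · exact ⟨c, hcC, hcA, hcV⟩
    have hBA := hmin _ hBqs diff_subset
    have hqAV : q ∈ A \ V := by rw [hBA]; exact hGA hq1
    exact hqAV.2 hqV
  · -- Case 2 : the interior is a wandering open set
    push_neg at hcase
    have hkey : ∀ (k : ℤ), k ≠ 0 → ∀ x, x ∈ G → (f.toEquiv ^ k) x ∈ G → False := by
      intro k hk x hx hfx
      exact eq_empty_iff_forall_notMem.mp (hcase k hk) x ⟨hx, hfx⟩
    have hBne : A \ G ≠ A := by
      obtain ⟨g, hg⟩ := hGne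
      intro h
      have hgm : g ∈ A \ G := by rw [h]; exact hGA hg
      exact hgm.2 hg
    have hBnqs : ¬ IsQuasiSection f (A \ G) := fun h => hBne (hmin _ h diff_subset)
    have hnall : ¬ ∀ a ∈ A, (closure (orbitZ f a) ∩ (A \ G)).Nonempty := by
      intro h
      exact hBnqs (qs_of_meets' f hAqs diff_subset (hAqs.1.sdiff hGopen) h)
    push_neg at hnall
    obtain ⟨a, haA, hAE⟩ := hnall
    set C := closure (orbitZ f a) with hC
    have hCA : ∀ c, c ∈ C → c ∈ A → c ∈ G := by
      intro c h1 h2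
      by_contra h3
      exact eq_empty_iff_forall_notMem.mp hAE c ⟨h1, h2, h3⟩
    have haC : a ∈ C := subset_closure (mem_orbitZ_self' f a)
    have haG : a ∈ G := hCA a haC haA
    have hcov : C ⊆ ⋃ k : ℤ, (fun x : X => (f.toEquiv ^ k) x) ⁻¹' G := by
      intro c hc
      obtain ⟨t, htc, htA⟩ := qs_meets_orbit_closure' f hAqs c
      have htC : t ∈ C := by
        have horb : orbitZ f c ⊆ C := by
          rintro y ⟨m, rfl⟩
          exact zpow_mem_closure_orbitZ' f hc m
        exact closure_minimal horb isClosed_closure htc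
      have htG : t ∈ G := hCA t htC htA
      obtain ⟨y, hyG, hyo⟩ := mem_closure_iff.1 htc G hGopen htG
      obtain ⟨m, rfl⟩ := hyo
      exact mem_iUnion.2 ⟨m, hyG⟩
    obtain ⟨F, hF⟩ := (isClosed_closure.isCompact).elim_finite_subcover _
      (fun k : ℤ => hGopen.preimage (cont_zpow' f k)) hcov
    obtain ⟨m, hm⟩ := Infinite.exists_notMem_finset (F.image (fun k : ℤ => -k))
    have hfmC : (f.toEquiv ^ m) a ∈ C := zpow_mem_closure_orbitZ' f haC m
    obtain ⟨k, hkF, hkG⟩ := mem_iUnion₂.1 (hF hfmC)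
    have h1 : (f.toEquiv ^ (k + m)) a ∈ G := by
      rw [zpow_apply_add' f k m a]
      exact hkG
    have hkm : k + m ≠ 0 := by
      intro h
      exact hm (Finset.mem_image.2 ⟨k, hkF, by omega⟩)
    exact hkey (k + m) hkm a haG h1
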